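/- arXiv:2003.05382 — 4 statements merged into one kernel-verified Lean document; each statement's English description precedes it below -/
import Mathlib

section
/- For distribution functions F,G on [0,∞), the function F ∪∨ G := FG/(F+G-FG) (with value 0 whenever F(x)=0 or G(x)=0) is again a distribution function on [0,∞). -/
open Filter Topology Set

/-- Boolean max-convolution of distribution functions, with value 0 whenever
one of them vanishes. -/
noncomputable def boolMaxConv (F G : ℝ → ℝ) (x : ℝ) : ℝ :=
  if F x = 0 ∨ G x = 0 then 0 else F x * G x / (F x + G x - F x * G x)

theorem boolMaxConv_isDistributionFunction (F G : ℝ → ℝ)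
    (hFmono : Monotone F) (hGmono : Monotone G)
    (hFrc : ∀ x, ContinuousWithinAt F (Ici x) x)
    (hGrc : ∀ x, ContinuousWithinAt G (Ici x) x)
    (hFneg : ∀ x < (0:ℝ), F x = 0) (hGneg : ∀ x < (0:ℝ), G x = 0)
    (hFtop : Tendsto F atTop (𝓝 1)) (hGtop : Tendsto G atTop (𝓝 1)) :
    Monotone (boolMaxConv F G) ∧
    (∀ x, ContinuousWithinAt (boolMaxConv F G) (Ici x) x) ∧
    (∀ x < (0:ℝ), boolMaxConv F G x = 0) ∧
    Tendsto (boolMaxConv F G) atTop (𝓝 1) := by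
  have hF0 : ∀ x, 0 ≤ F x := by
    intro x
    rcases lt_or_ge x 0 with h | h
    · exact (hFneg x h).ge
    · have h1 := hFneg (-1) (by norm_num)
      have h2 := hFmono (show (-1:ℝ) ≤ x by linarith)
      linarith
  have hG0 : ∀ x, 0 ≤ G x := by
    intro x
    rcases lt_or_ge x 0 with h | h
    · exact (hGneg x h).ge
    · have h1 := hGneg (-1) (by norm_num)
      have h2 := hGmono (show (-1:ℝ) ≤ x by linarith)
      linarith
  have hF1 : ∀ x, F x ≤ 1 := fun x => hFmono.ge_of_tendsto hFtop x
  have hG1 : ∀ x, G x ≤ 1 := fun x => hGmono.ge_of_tendsto hGtop x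
  have hden : ∀ x, G x ≠ 0 → 0 < F x + G x - F x * G x := by
    intro x hx
    have hb : 0 < G x := lt_of_le_of_ne (hG0 x) (Ne.symm hx)
    nlinarith [hF0 x, mul_nonneg (hF0 x) (sub_nonneg.2 (hG1 x))]
  have hHnn : ∀ x, 0 ≤ boolMaxConv F G x := by
    intro x
    unfold boolMaxConv
    split
    · exact le_refl 0
    · next h =>
      push_neg at h
      exact div_nonneg (mul_nonneg (hF0 x) (hG0 x)) (hden x h.2).le
  have hHleF : ∀ x, boolMaxConv F G x ≤ F x := by
    intro x
    unfold boolMaxConv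
    split
    · exact hF0 x
    · next h =>
      push_neg at h
      rw [div_le_iff₀ (hden x h.2)]
      nlinarith [hF0 x, hG1 x, hG0 x, mul_nonneg (mul_nonneg (hF0 x) (hF0 x)) (sub_nonneg.2 (hG1 x))]
  have hHleG : ∀ x, boolMaxConv F G x ≤ G x := by
    intro x
    unfold boolMaxConv
    split
    · exact hG0 x
    · next h =>
      push_neg at h
      rw [div_le_iff₀ (hden x h.2)]
      nlinarith [hG0 x, hF1 x, hF0 x, mul_nonneg (mul_nonneg (hG0 x) (hG0 x)) (sub_nonneg.2 (hF1 x))]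
  refine ⟨?_, ?_, ?_, ?_⟩
  · -- Monotone
    intro x y hxy
    by_cases h : F x = 0 ∨ G x = 0
    · have : boolMaxConv F G x = 0 := by simp [boolMaxConv, h]
      rw [this]; exact hHnn y
    · push_neg at h
      have hfx : 0 < F x := lt_of_le_of_ne (hF0 x) (Ne.symm h.1)
      have hgx : 0 < G x := lt_of_le_of_ne (hG0 x) (Ne.symm h.2)
      have hfy : 0 < F y := lt_of_lt_of_le hfx (hFmono hxy)
      have hgy : 0 < G y := lt_of_lt_of_le hgx (hGmono hxy)
      unfold boolMaxConv
      rw [if_neg (by push_neg; exact ⟨hfx.ne', hgx.ne'⟩),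
        if_neg (by push_neg; exact ⟨hfy.ne', hgy.ne'⟩)]
      rw [div_le_div_iff₀ (hden x hgx.ne') (hden y hgy.ne')]
      nlinarith [mul_nonneg (mul_nonneg (sub_nonneg.2 (hFmono hxy)) hgx.le) hgy.le,
        mul_nonneg (mul_nonneg (sub_nonneg.2 (hGmono hxy)) hfx.le) hfy.le]
  · -- right-continuity
    intro x
    by_cases h : F x = 0 ∨ G x = 0
    · have hx0 : boolMaxConv F G x = 0 := by simp [boolMaxConv, h]
      have key : Tendsto (boolMaxConv F G) (𝓝[Ici x] x) (𝓝 0) := by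
        rcases h with hf | hg
        · exact squeeze_zero hHnn hHleF (hf ▸ hFrc x)
        · exact squeeze_zero hHnn hHleG (hg ▸ hGrc x)
      unfold ContinuousWithinAt
      rw [hx0]; exact key
    · push_neg at h
      have hfx : 0 < F x := lt_of_le_of_ne (hF0 x) (Ne.symm h.1)
      have hgx : 0 < G x := lt_of_le_of_ne (hG0 x) (Ne.symm h.2)
      have hc : ContinuousWithinAt (fun y => F y * G y / (F y + G y - F y * G y)) (Ici x) x :=
        ((hFrc x).mul (hGrc x)).div (((hFrc x).add (hGrc x)).sub ((hFrc x).mul (hGrc x)))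
          (ne_of_gt (hden x hgx.ne'))
      refine hc.congr (fun y hy => ?_) ?_
      · have hfy : 0 < F y := lt_of_lt_of_le hfx (hFmono hy)
        have hgy : 0 < G y := lt_of_lt_of_le hgx (hGmono hy)
        unfold boolMaxConv
        rw [if_neg (by push_neg; exact ⟨hfy.ne', hgy.ne'⟩)]
      · unfold boolMaxConv
        rw [if_neg (by push_neg; exact ⟨hfx.ne', hgx.ne'⟩)]
  · -- negatives
    intro x hx
    simp [boolMaxConv, hFneg x hx]
  · -- limit at top
    have hev : ∀ᶠ x in atTop, F x * G x / (F x + G x - F x * G x) = boolMaxConv F G x := by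
      filter_upwards [hFtop.eventually (eventually_gt_nhds zero_lt_one),
        hGtop.eventually (eventually_gt_nhds zero_lt_one)] with x hf hg
      unfold boolMaxConv
      rw [if_neg (by push_neg; exact ⟨hf.ne', hg.ne'⟩)]
    have hlim : Tendsto (fun x => F x * G x / (F x + G x - F x * G x)) atTop (𝓝 1) := by
      have := Tendsto.div (hFtop.mul hGtop) ((hFtop.add hGtop).sub (hFtop.mul hGtop))
        (by norm_num)
      norm_num at this
      exact this
    exact hlim.congr' hev
end

section
/- The map Λ^∨ is a homomorphism from classical max-convolution to free max-convolution: for all a,b ∈ [0,1], Λ^∨(ab) = max{0, Λ^∨(a)+Λ^∨(b)-1}, where Λ^∨(0)=0 and Λ^∨(x)=max{0,1+log x} for x∈(0,1]. -/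
noncomputable def lamVee (x : ℝ) : ℝ := if x = 0 then 0 else max 0 (1 + Real.log x)

lemma lamVee_le_one {x : ℝ} (hx : x ∈ Set.Icc (0:ℝ) 1) : lamVee x ≤ 1 := by
  unfold lamVee
  split
  · norm_num
  · have : Real.log x ≤ 0 := Real.log_nonpos hx.1 hx.2
    simp only [max_le_iff]
    constructor <;> linarith

theorem lamVee_homomorphism (a b : ℝ) (ha : a ∈ Set.Icc (0:ℝ) 1)
    (hb : b ∈ Set.Icc (0:ℝ) 1) :
    lamVee (a * b) = max 0 (lamVee a + lamVee b - 1) := by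
  rcases eq_or_lt_of_le ha.1 with h0a | h0a
  · have hble := lamVee_le_one hb
    have h1 : lamVee a = 0 := by simp [lamVee, ← h0a]
    have h2 : a * b = 0 := by rw [← h0a]; ring
    rw [h2, h1, show lamVee 0 = 0 from by simp [lamVee], zero_add,
      max_eq_left (by linarith : lamVee b - 1 ≤ 0)]
  rcases eq_or_lt_of_le hb.1 with h0b | h0b
  · have hale := lamVee_le_one ha
    have h1 : lamVee b = 0 := by simp [lamVee, ← h0b]
    have h2 : a * b = 0 := by rw [← h0b]; ring
    rw [h2, h1, show lamVee 0 = 0 from by simp [lamVee],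
      max_eq_left (by linarith : lamVee a + 0 - 1 ≤ 0)]
  have hab : a * b ≠ 0 := by positivity
  have hla : Real.log a ≤ 0 := Real.log_nonpos ha.1 ha.2
  have hlb : Real.log b ≤ 0 := Real.log_nonpos hb.1 hb.2
  simp only [lamVee, if_neg hab, if_neg (ne_of_gt h0a), if_neg (ne_of_gt h0b),
    Real.log_mul (ne_of_gt h0a) (ne_of_gt h0b)]
  rcases le_or_gt (1 + Real.log a) 0 with h1 | h1
  · rw [max_eq_left h1, max_eq_left (by linarith), max_eq_left (by
      have h2 : max 0 (1 + Real.log b) ≤ 1 := max_le (by norm_num) (by linarith)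
      linarith)]
  rcases le_or_gt (1 + Real.log b) 0 with h2 | h2
  · rw [max_eq_left (by linarith), max_eq_left h2, max_eq_left (by
      have : max 0 (1 + Real.log a) ≤ 1 := max_le (by norm_num) (by linarith)
      linarith)]
  · rw [max_eq_right h1.le, max_eq_right h2.le]
    ring_nf
end

section
/- The operators B_t^∨ on distribution-function values, defined by B_t^∨(a) := b_{1/(1+t)}(max{(1+t)a - t, 0}) where b_s(a)=a/(s-(s-1)a), form a semigroup: B_t^∨ ∘ B_s^∨ = B_{t+s}^∨ for all s,t ≥ 0. -/
/-- Boolean max-convolution power on values. -/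
noncomputable def boolMaxPow (s a : ℝ) : ℝ := a / (s - (s - 1) * a)

/-- The max-Belinschi-Nica operator on distribution-function values. -/
noncomputable def BVee (t a : ℝ) : ℝ := boolMaxPow (1 / (1 + t)) (max ((1 + t) * a - t) 0)

lemma BVee_eq (s a : ℝ) (hs : 0 ≤ s) :
    BVee s a = (1 + s) * max ((1 + s) * a - s) 0 / (1 + s * max ((1 + s) * a - s) 0) := by
  set m := max ((1 + s) * a - s) 0 with hm
  have hm0 : 0 ≤ m := le_max_right _ _
  have h1s : (0:ℝ) < 1 + s := by linarith
  have hden : (0:ℝ) < 1 + s * m := by positivity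
  unfold BVee boolMaxPow
  rw [← hm]
  have : 1 / (1 + s) - (1 / (1 + s) - 1) * m = (1 + s * m) / (1 + s) := by
    field_simp
    ring
  rw [this, div_div_eq_mul_div]
  field_simp

theorem BVee_semigroup (s t : ℝ) (hs : 0 ≤ s) (ht : 0 ≤ t)
    (a : ℝ) (ha : a ∈ Set.Icc (0:ℝ) 1) :
    BVee t (BVee s a) = BVee (t + s) a := by
  obtain ⟨ha0, ha1⟩ := ha
  rw [BVee_eq s a hs, BVee_eq t _ ht, BVee_eq (t + s) a (by linarith)]
  by_cases hc : (1 + s) * a - s ≤ 0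
  · have h1 : max ((1 + s) * a - s) 0 = 0 := max_eq_right hc
    have h2 : max ((1 + (t + s)) * a - (t + s)) 0 = 0 := by
      apply max_eq_right; nlinarith
    rw [h1, h2]
    have h3 : (1 + t) * ((1 + s) * 0 / (1 + s * 0)) - t = -t := by norm_num
    rw [h3]
    have h4 : max (-t) 0 = 0 := max_eq_right (by linarith)
    rw [h4]; norm_num
  · push_neg at hc
    have hm : max ((1 + s) * a - s) 0 = (1 + s) * a - s := max_eq_left hc.le
    rw [hm]
    set m := (1 + s) * a - s with hmdef
    have h1s : (0:ℝ) < 1 + s := by linarith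
    have h1t : (0:ℝ) < 1 + t := by linarith
    have hden1 : (0:ℝ) < 1 + s * m := by nlinarith
    set d := (1 + (t + s)) * a - (t + s) with hddef
    have key : (1 + t) * ((1 + s) * m / (1 + s * m)) - t = (1 + s) * d / (1 + s * m) := by
      field_simp; ring
    rw [key]
    by_cases hd : d ≤ 0
    · have h2 : max ((1 + s) * d / (1 + s * m)) 0 = 0 := by
        apply max_eq_right
        apply div_nonpos_of_nonpos_of_nonneg
        · nlinarith
        · linarith
      have h3 : max d 0 = 0 := max_eq_right hd
      rw [h2, h3]; norm_num
    · push_neg at hd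
      have h2 : max ((1 + s) * d / (1 + s * m)) 0 = (1 + s) * d / (1 + s * m) := by
        apply max_eq_left
        positivity
      have h3 : max d 0 = d := max_eq_left hd.le
      rw [h2, h3]
      have hden2 : (0:ℝ) < 1 + (t + s) * d := by nlinarith
      have hden3 : (0:ℝ) < 1 + s * m + t * ((1 + s) * d) := by
        have h1 := mul_nonneg hs hc.le
        have h2 := mul_nonneg ht (mul_nonneg h1s.le hd.le)
        linarith
      have e1 : 1 + t * ((1 + s) * d / (1 + s * m)) = (1 + s * m + t * ((1 + s) * d)) / (1 + s * m) := by
        field_simp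
      have hne : 1 + t * ((1 + s) * d / (1 + s * m)) ≠ 0 := by
        rw [e1]; exact (div_pos hden3 hden1).ne'
      rw [div_eq_div_iff hne hden2.ne', e1]
      field_simp
      rw [hmdef, hddef]
      ring
end

section
/- For the Marchenko–Pastur law π with density (1/(2π))·√((4-x)/x) on (0,4), the function Ψ_π(z) := ∫₀⁴ zx/(1-zx) dπ(x) satisfies Ψ_π(z) = (-2z + 1 - √(1-4z))/(2z) for all real z < 0. -/
open MeasureTheory Real

noncomputable def mpW (x : ℝ) : ℝ := Real.sqrt (4 * x - x ^ 2)

noncomputable def mpF (z x : ℝ) : ℝ :=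
  -mpW x + ((1 - 2 * z) / z) * Real.arcsin ((x - 2) / 2) -
    (2 * Real.sqrt (1 - 4 * z) / z) *
      Real.arctan (((1 - 2 * z) * (x - 2) - 2 * z * (2 + mpW x)) /
        (Real.sqrt (1 - 4 * z) * (2 + mpW x)))

lemma mpW_nonneg (x : ℝ) : 0 ≤ mpW x := Real.sqrt_nonneg _

lemma mpW_pos {x : ℝ} (hx : x ∈ Set.Ioo (0:ℝ) 4) : 0 < mpW x := by
  apply Real.sqrt_pos.mpr; nlinarith [hx.1, hx.2]

lemma mpW_sq {x : ℝ} (hx : x ∈ Set.Ioo (0:ℝ) 4) : mpW x ^ 2 = 4 * x - x ^ 2 :=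
  Real.sq_sqrt (by nlinarith [hx.1, hx.2])

lemma hasDerivAt_mpW {x : ℝ} (hx : x ∈ Set.Ioo (0:ℝ) 4) :
    HasDerivAt mpW ((2 - x) / mpW x) x := by
  have h : HasDerivAt (fun y : ℝ => 4 * y - y ^ 2) (4 - 2 * x) x := by
    exact (((hasDerivAt_id x).const_mul 4).sub (hasDerivAt_pow 2 x)).congr_deriv (by simp)
  have := h.sqrt (by nlinarith [hx.1, hx.2] : 4 * x - x ^ 2 ≠ 0)
  refine this.congr_deriv (Eq.symm ?_)
  rw [div_eq_div_iff (mpW_pos hx).ne' (by have := mpW_pos hx; positivity)]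
  · unfold mpW; ring

lemma hasDerivAt_arcsin_part {x : ℝ} (hx : x ∈ Set.Ioo (0:ℝ) 4) :
    HasDerivAt (fun y : ℝ => Real.arcsin ((y - 2) / 2)) (1 / mpW x) x := by
  have hin : HasDerivAt (fun y : ℝ => (y - 2) / 2) (1 / 2) x := by
    simpa using ((hasDerivAt_id x).sub_const 2).div_const 2
  have h1 : (x - 2) / 2 ≠ -1 := by
    have : -1 < (x - 2) / 2 := by linarith [hx.1]
    exact this.ne'
  have h2 : (x - 2) / 2 ≠ 1 := by
    have : (x - 2) / 2 < 1 := by linarith [hx.2]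
    exact this.ne
  have := (Real.hasDerivAt_arcsin h1 h2).comp x hin
  refine this.congr_deriv (Eq.symm ?_)
  have hsq : Real.sqrt (1 - ((x - 2) / 2) ^ 2) = mpW x / 2 := by
    rw [show 1 - ((x - 2) / 2) ^ 2 = (mpW x / 2) ^ 2 by
      have := mpW_sq hx; nlinarith [this]]
    exact Real.sqrt_sq (by have := mpW_pos hx; positivity)
  rw [hsq]
  have := mpW_pos hx
  field_simp

lemma hasDerivAt_arctan_part (z : ℝ) (hz : z < 0) {x : ℝ} (hx : x ∈ Set.Ioo (0:ℝ) 4) :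
    HasDerivAt (fun y : ℝ => Real.arctan (((1 - 2 * z) * (y - 2) - 2 * z * (2 + mpW y)) /
        (Real.sqrt (1 - 4 * z) * (2 + mpW y))))
      (Real.sqrt (1 - 4 * z) / (2 * mpW x * (1 - z * x))) x := by
  set s := Real.sqrt (1 - 4 * z) with hs_def
  have hs : 0 < s := Real.sqrt_pos.mpr (by linarith)
  have hs2 : s ^ 2 = 1 - 4 * z := Real.sq_sqrt (by linarith)
  have hw : 0 < mpW x := mpW_pos hx
  have hw2 : mpW x ^ 2 = 4 * x - x ^ 2 := mpW_sq hx
  set w := mpW x with hw_def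
  have hzx : (0:ℝ) < 1 - z * x := by nlinarith [hx.1, hx.2]
  have hN : HasDerivAt (fun y : ℝ => (1 - 2 * z) * (y - 2) - 2 * z * (2 + mpW y))
      ((1 - 2 * z) - 2 * z * ((2 - x) / w)) x := by
    have h1 : HasDerivAt (fun y : ℝ => (1 - 2 * z) * (y - 2)) (1 - 2 * z) x := by
      simpa using ((hasDerivAt_id x).sub_const 2).const_mul (1 - 2 * z)
    have h2 : HasDerivAt (fun y : ℝ => 2 * z * (2 + mpW y)) (2 * z * ((2 - x) / w)) x :=
      ((hasDerivAt_mpW hx).const_add 2).const_mul (2 * z)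
    exact h1.sub h2
  have hD : HasDerivAt (fun y : ℝ => s * (2 + mpW y)) (s * ((2 - x) / w)) x :=
    ((hasDerivAt_mpW hx).const_add 2).const_mul s
  have hD_ne : s * (2 + w) ≠ 0 := by positivity
  have hu := (hN.div hD hD_ne).arctan
  refine hu.congr_deriv (Eq.symm ?_)
  set Nv := (1 - 2 * z) * (x - 2) - 2 * z * (2 + w) with hNv
  set A := (1 - 2 * z) - 2 * z * ((2 - x) / w) with hA
  set C := s * ((2 - x) / w) with hC
  set E := s * (2 + w) with hE
  have hE_ne : E ≠ 0 := hD_ne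
  have key1 : A * E - Nv * C = 2 * s * (1 - 2 * z) * (2 + w) / w := by
    rw [hA, hC, hE, hNv]
    field_simp
    linear_combination (1 - 2 * z) * hw2
  have key2 : E ^ 2 + Nv ^ 2 = 4 * (1 - 2 * z) * (2 + w) * (1 - z * x) := by
    rw [hE, hNv]
    linear_combination ((2 + w) ^ 2) * hs2 + (1 - 2 * z - 2 * z + 4 * z ^ 2) * hw2
  have step : (A * E - Nv * C) / E ^ 2 / (1 + (Nv / E) ^ 2)
      = (A * E - Nv * C) / (E ^ 2 + Nv ^ 2) := by
    rw [div_div]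
    congr 1
    field_simp
  show s / (2 * w * (1 - z * x)) = 1 / (1 + (Nv / E) ^ 2) * ((A * E - Nv * C) / E ^ 2)
  rw [show 1 / (1 + (Nv / E) ^ 2) * ((A * E - Nv * C) / E ^ 2)
      = (A * E - Nv * C) / E ^ 2 / (1 + (Nv / E) ^ 2) by ring, step, key1, key2]
  have h12 : (0:ℝ) < 1 - 2 * z := by linarith
  field_simp
  ring

lemma hasDerivAt_mpF (z : ℝ) (hz : z < 0) {x : ℝ} (hx : x ∈ Set.Ioo (0:ℝ) 4) :
    HasDerivAt (mpF z) (z * mpW x / (1 - z * x)) x := by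
  have hs : 0 < Real.sqrt (1 - 4 * z) := Real.sqrt_pos.mpr (by linarith)
  have hs2 : Real.sqrt (1 - 4 * z) ^ 2 = 1 - 4 * z := Real.sq_sqrt (by linarith)
  have hw : 0 < mpW x := mpW_pos hx
  have hw2 : mpW x ^ 2 = 4 * x - x ^ 2 := mpW_sq hx
  have hzx : (0:ℝ) < 1 - z * x := by nlinarith [hx.1, hx.2]
  have h := (((hasDerivAt_mpW hx).neg).add
      ((hasDerivAt_arcsin_part hx).const_mul ((1 - 2 * z) / z))).sub
    ((hasDerivAt_arctan_part z hz hx).const_mul (2 * Real.sqrt (1 - 4 * z) / z))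
  refine h.congr_deriv (Eq.symm ?_)
  set s := Real.sqrt (1 - 4 * z)
  set w := mpW x
  have hz' : z ≠ 0 := hz.ne
  have hw' : w ≠ 0 := hw.ne'
  have hs' : s ≠ 0 := hs.ne'
  have hzx' : (1 - z * x) ≠ 0 := hzx.ne'
  have hrw : 2 * s / z * (s / (2 * w * (1 - z * x))) = (1 - 4 * z) / (z * w * (1 - z * x)) := by
    field_simp
    linear_combination hs2
  rw [hrw]
  field_simp
  linear_combination z ^ 2 * hw2

lemma continuous_mpW : Continuous mpW :=
  Real.continuous_sqrt.comp (by continuity)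

lemma continuous_mpF (z : ℝ) (hz : z < 0) : Continuous (mpF z) := by
  have hs : 0 < Real.sqrt (1 - 4 * z) := Real.sqrt_pos.mpr (by linarith)
  have hden : ∀ y : ℝ, Real.sqrt (1 - 4 * z) * (2 + mpW y) ≠ 0 := by
    intro y
    have := mpW_nonneg y
    positivity
  apply Continuous.sub
  · apply Continuous.add
    · exact continuous_mpW.neg
    · exact continuous_const.mul (Real.continuous_arcsin.comp (by continuity))
  · apply Continuous.mul continuous_const
    apply Real.continuous_arctan.comp
    apply Continuous.div
    · exact (continuous_const.mul (continuous_id.sub continuous_const)).sub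
        (continuous_const.mul (continuous_const.add continuous_mpW))
    · exact continuous_const.mul (continuous_const.add continuous_mpW)
    · exact hden

lemma ftc_mp (z : ℝ) (hz : z < 0) :
    ∫ y in (0:ℝ)..4, z * mpW y / (1 - z * y) = mpF z 4 - mpF z 0 := by
  apply intervalIntegral.integral_eq_sub_of_hasDeriv_right_of_le (by norm_num)
    ((continuous_mpF z hz).continuousOn)
  · intro x hx
    exact (hasDerivAt_mpF z hz hx).hasDerivWithinAt
  · apply ContinuousOn.intervalIntegrable
    apply ContinuousOn.div
    · exact (continuous_const.mul continuous_mpW).continuousOn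
    · exact (continuous_const.sub (continuous_const.mul continuous_id)).continuousOn
    · intro y hy
      rw [Set.uIcc_of_le (by norm_num : (0:ℝ) ≤ 4)] at hy
      have : z * y ≤ 0 := mul_nonpos_of_nonpos_of_nonneg hz.le hy.1
      intro h; linarith

lemma mpF_diff (z : ℝ) (hz : z < 0) :
    mpF z 4 - mpF z 0 = Real.pi * (1 - 2 * z - Real.sqrt (1 - 4 * z)) / z := by
  have hs : 0 < Real.sqrt (1 - 4 * z) := Real.sqrt_pos.mpr (by linarith)
  have hs2 : Real.sqrt (1 - 4 * z) ^ 2 = 1 - 4 * z := Real.sq_sqrt (by linarith)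
  set s := Real.sqrt (1 - 4 * z) with hsdef
  have hw4 : mpW 4 = 0 := by unfold mpW; norm_num
  have hw0 : mpW 0 = 0 := by unfold mpW; norm_num
  have harg4 : ((1 - 2 * z) * ((4:ℝ) - 2) - 2 * z * (2 + mpW 4)) / (s * (2 + mpW 4)) = s := by
    rw [hw4]
    rw [div_eq_iff (by positivity)]
    linear_combination (-2 : ℝ) * hs2
  have harg0 : ((1 - 2 * z) * ((0:ℝ) - 2) - 2 * z * (2 + mpW 0)) / (s * (2 + mpW 0)) = -s⁻¹ := by
    rw [hw0]
    rw [div_eq_iff (by positivity)]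
    field_simp
    ring
  unfold mpF
  rw [← hsdef, harg4, harg0, hw4, hw0]
  rw [Real.arctan_neg, Real.arctan_inv_of_pos hs]
  norm_num [Real.arcsin_one, Real.arcsin_neg_one,
    show ((4:ℝ) - 2) / 2 = 1 by norm_num, show ((0:ℝ) - 2) / 2 = -1 by norm_num]
  field_simp
  ring

theorem psi_marchenkoPastur (z : ℝ) (hz : z < 0) :
    ∫ x in Set.Ioo (0:ℝ) 4,
        (z * x / (1 - z * x)) * ((1 / (2 * Real.pi)) * Real.sqrt ((4 - x) / x)) =
      (-2 * z + 1 - Real.sqrt (1 - 4 * z)) / (2 * z) := by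
  have hcongr : ∀ x ∈ Set.Ioo (0:ℝ) 4,
      (z * x / (1 - z * x)) * ((1 / (2 * Real.pi)) * Real.sqrt ((4 - x) / x)) =
        (1 / (2 * Real.pi)) * (z * mpW x / (1 - z * x)) := by
    intro x hx
    have hx0 : 0 < x := hx.1
    have hzx : (0:ℝ) < 1 - z * x := by nlinarith [hx.2]
    have hsq : Real.sqrt ((4 - x) / x) = mpW x / x := by
      rw [show (4 - x) / x = (4 * x - x ^ 2) / x ^ 2 by
        field_simp]
      rw [Real.sqrt_div (by nlinarith [hx.2]) (x ^ 2), Real.sqrt_sq hx0.le]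
      rfl
    rw [hsq]
    have hpi := Real.pi_pos
    field_simp
  rw [MeasureTheory.setIntegral_congr_fun measurableSet_Ioo hcongr]
  rw [MeasureTheory.integral_const_mul]
  rw [← MeasureTheory.integral_Ioc_eq_integral_Ioo,
    ← intervalIntegral.integral_of_le (by norm_num : (0:ℝ) ≤ 4)]
  rw [ftc_mp z hz, mpF_diff z hz]
  have hpi := Real.pi_ne_zero
  have hz' : z ≠ 0 := hz.ne
  field_simp
  ring
end
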